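/- Let ξ_n be the reflected Gray code bijection and for 1 ≤ i ≤ 2^{n−1} let F_i = {i, i+1, ..., i + 2^{n−1} − 1} (an arc of 2^{n−1} consecutive labels). Then for n ≥ 2, Σ_{i=1}^{2^{n−1}} θ(n, ξ_n^{-1}(F_i)) = 3·2^{2n−3} − 2^{n−1}. -/

import Mathlib

open Finset

/-- Number of coordinates in which two 0-1 vectors differ. -/
def diffCount {n : ℕ} (u v : Fin n → Bool) : ℕ :=
  (Finset.univ.filter fun i => u i ≠ v i).card

/-- Adjacency in the hypercube `Q_n`: differ in exactly one coordinate. -/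
def cubeAdj {n : ℕ} (u v : Fin n → Bool) : Prop := diffCount u v = 1

instance {n : ℕ} (u v : Fin n → Bool) : Decidable (cubeAdj u v) :=
  inferInstanceAs (Decidable (diffCount u v = 1))

/-- `theta n S`: number of edges of `Q_n` with exactly one endpoint in `S`. -/
def theta (n : ℕ) (S : Finset (Fin n → Bool)) : ℕ :=
  ((Finset.univ ×ˢ Finset.univ).filter fun p : (Fin n → Bool) × (Fin n → Bool) =>
    p.1 ∈ S ∧ p.2 ∉ S ∧ cubeAdj p.1 p.2).card

/-- The reflected Gray code map `ξ_n : {0,1}^n → {1,...,2^n}`. -/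
def gray : (n : ℕ) → (Fin n → Bool) → ℕ
  | 0, _ => 1
  | n + 1, v =>
    if v 0 = false then gray n (fun i => v i.succ)
    else 2 ^ (n + 1) + 1 - gray n (fun i => v i.succ)

/-- Wirelength of an embedding `f` of `Q_n` into a host with distance `d`. -/
def wirelength {n : ℕ} {α : Type*} (d : α → α → ℕ) (f : (Fin n → Bool) → α) : ℕ :=
  (∑ u : Fin n → Bool, ∑ v : Fin n → Bool, if cubeAdj u v then d (f u) (f v) else 0) / 2

/-- Cyclic distance on the cycle with `m` vertices labeled `1,...,m`. -/
def cycDist (m a b : ℕ) : ℕ := min (Nat.dist a b) (m - Nat.dist a b)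

/-- The 2-order Gray code map. -/
def gray2 (n₁ n₂ : ℕ) (v : Fin (n₁ + n₂) → Bool) : ℕ × ℕ :=
  (gray n₁ fun i => v (Fin.castAdd n₂ i), gray n₂ fun i => v (Fin.natAdd n₁ i))

lemma diffCount_eq_sum {n : ℕ} (u v : Fin n → Bool) :
    diffCount u v = ∑ i, if u i ≠ v i then 1 else 0 := Finset.card_filter _ _

lemma diffCount_cons {n : ℕ} (x y : Bool) (u v : Fin n → Bool) :
    diffCount (Fin.cons x u) (Fin.cons y v) = (if x ≠ y then 1 else 0) + diffCount u v := by
  simp [diffCount_eq_sum, Fin.sum_univ_succ]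

lemma diffCount_eq_zero {n : ℕ} {u v : Fin n → Bool} : diffCount u v = 0 ↔ u = v := by
  constructor
  · intro h
    funext i
    by_contra hi
    have : i ∈ Finset.univ.filter fun i => u i ≠ v i := by simp [hi]
    simp [diffCount, Finset.card_eq_zero] at h
    exact hi (h (x := i))
  · rintro rfl; simp [diffCount]

lemma cubeAdj_comm {n : ℕ} (u v : Fin n → Bool) : cubeAdj u v ↔ cubeAdj v u := by
  unfold cubeAdj diffCount
  rw [show (Finset.univ.filter fun i => u i ≠ v i) = Finset.univ.filter fun i => v i ≠ u i by
    apply Finset.filter_congr; intro i _; simp [ne_comm]]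

lemma cubeAdj_cons {n : ℕ} (x y : Bool) (u v : Fin n → Bool) :
    cubeAdj (Fin.cons x u) (Fin.cons y v) ↔ (x = y ∧ cubeAdj u v) ∨ (x ≠ y ∧ u = v) := by
  unfold cubeAdj
  rw [diffCount_cons]
  by_cases h : x = y <;> simp [h, diffCount_eq_zero]

lemma gray_succ {n : ℕ} (x : Bool) (u : Fin n → Bool) :
    gray (n+1) (Fin.cons x u) = if x = false then gray n u else 2^(n+1)+1 - gray n u := by
  simp [gray]

lemma gray_bounds : ∀ (n : ℕ) (v : Fin n → Bool), 1 ≤ gray n v ∧ gray n v ≤ 2^n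
  | 0, _ => ⟨le_refl 1, le_refl 1⟩
  | n+1, v => by
    have h := gray_bounds n (fun i => v i.succ)
    have : (2:ℕ)^(n+1) = 2 * 2^n := by ring
    simp only [gray]
    split <;> omega

lemma gray_ge_one (n : ℕ) (v : Fin n → Bool) : 1 ≤ gray n v := (gray_bounds n v).1
lemma gray_le (n : ℕ) (v : Fin n → Bool) : gray n v ≤ 2^n := (gray_bounds n v).2

lemma gray_injective : ∀ n, Function.Injective (gray n)
  | 0 => fun v w _ => funext fun i => i.elim0
  | n+1 => by
    intro v w h
    rw [← Fin.cons_self_tail v, ← Fin.cons_self_tail w] at h ⊢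
    rw [gray_succ, gray_succ] at h
    have h1 := gray_ge_one n (Fin.tail v)
    have h2 := gray_le n (Fin.tail v)
    have h3 := gray_ge_one n (Fin.tail w)
    have h4 := gray_le n (Fin.tail w)
    cases hv : v 0 <;> cases hw : w 0 <;> rw [hv, hw] at h <;> simp at h
    · rw [gray_injective n h]
    · omega
    · omega
    · have : gray n (Fin.tail v) = gray n (Fin.tail w) := by omega
      rw [gray_injective n this]

lemma gray_image (n : ℕ) : (univ : Finset (Fin n → Bool)).image (gray n) = Icc 1 (2^n) := by
  apply Finset.eq_of_subset_of_card_le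
  · intro a ha
    simp only [mem_image] at ha
    obtain ⟨v, _, rfl⟩ := ha
    simp [mem_Icc, gray_ge_one, gray_le]
  · rw [Nat.card_Icc, card_image_of_injective _ (gray_injective n), card_univ]
    simp

lemma sum_gray (n : ℕ) (f : ℕ → ℕ) :
    ∑ v : Fin n → Bool, f (gray n v) = ∑ a ∈ Icc 1 (2^n), f a := by
  rw [← gray_image, sum_image (fun x _ y _ h => gray_injective n h)]

lemma sum_cons (n : ℕ) (g : (Fin (n+1) → Bool) → ℕ) :
    ∑ v : Fin (n+1) → Bool, g v = ∑ x : Bool, ∑ u : Fin n → Bool, g (Fin.cons x u) := by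
  rw [show (∑ x : Bool, ∑ u : Fin n → Bool, g (Fin.cons x u))
      = ∑ p : Bool × (Fin n → Bool), g (Fin.cons p.1 p.2) from (Fintype.sum_prod_type (fun p : Bool × (Fin n → Bool) => g (Fin.cons p.1 p.2))).symm]
  exact Fintype.sum_equiv (Fin.consEquiv (fun _ : Fin (n+1) => Bool)).symm _ _
    (fun v => by simp [Fin.consEquiv, Fin.cons_self_tail])

lemma sum_odd (m : ℕ) : ∑ a ∈ Icc 1 m, (2*a-1) = m^2 := by
  induction m with
  | zero => simp
  | succ m ih =>
    rw [Finset.sum_Icc_succ_top (by omega), ih]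
    ring_nf
    omega

lemma sum_refl (m : ℕ) : ∑ a ∈ Icc 1 m, (2*m+1-2*a) = m^2 := by
  induction m with
  | zero => simp
  | succ m ih =>
    rw [Finset.sum_Icc_succ_top (by omega)]
    have : ∑ a ∈ Icc 1 m, (2*(m+1)+1-2*a) = ∑ a ∈ Icc 1 m, ((2*m+1-2*a) + 2) := by
      apply Finset.sum_congr rfl
      intro a ha
      simp only [mem_Icc] at ha
      omega
    rw [this, Finset.sum_add_distrib, ih]
    simp only [Finset.sum_const, Nat.card_Icc, smul_eq_mul]
    ring_nf
    omega

lemma sum_min (m : ℕ) :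
    ∑ a ∈ Icc 1 (2*m), min (2*a-1) (4*m+1-2*a) = 2*m^2 := by
  have hsplit : Icc 1 (2*m) = Icc 1 m ∪ Icc (m+1) (2*m) := by
    ext a; simp [mem_Icc, mem_union]; omega
  have hdisj : Disjoint (Icc 1 m) (Icc (m+1) (2*m)) := by
    simp [Finset.disjoint_left, mem_Icc]; omega
  rw [hsplit, Finset.sum_union hdisj]
  have e1 : ∑ a ∈ Icc 1 m, min (2*a-1) (4*m+1-2*a) = ∑ a ∈ Icc 1 m, (2*a-1) := by
    apply Finset.sum_congr rfl; intro a ha; simp only [mem_Icc] at ha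
    have : 2*a-1 ≤ 4*m+1-2*a := by omega
    omega
  have e2 : ∑ a ∈ Icc (m+1) (2*m), min (2*a-1) (4*m+1-2*a)
      = ∑ a ∈ Icc (m+1) (2*m), (4*m+1-2*a) := by
    apply Finset.sum_congr rfl; intro a ha; simp only [mem_Icc] at ha
    have : 4*m+1-2*a ≤ 2*a-1 := by omega
    omega
  have e3 : (∑ a ∈ Icc 1 m, (4*m+1-2*a)) + ∑ a ∈ Icc (m+1) (2*m), (4*m+1-2*a)
      = ∑ a ∈ Icc 1 (2*m), (4*m+1-2*a) := by
    rw [hsplit, Finset.sum_union hdisj]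
  have e4 : ∑ a ∈ Icc 1 (2*m), (4*m+1-2*a) = (2*m)^2 := by
    have := sum_refl (2*m)
    rw [show 2*(2*m)+1 = 4*m+1 by ring] at this
    exact this
  have e5 : ∑ a ∈ Icc 1 m, (4*m+1-2*a) = ∑ a ∈ Icc 1 m, ((2*m+1-2*a) + 2*m) := by
    apply Finset.sum_congr rfl; intro a ha; simp only [mem_Icc] at ha; omega
  rw [e1, e2, sum_odd]
  have := sum_refl m
  rw [e5, Finset.sum_add_distrib, this, Finset.sum_const, Nat.card_Icc] at e3
  simp at e3
  nlinarith [e3, e4]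

lemma cycDist_comm (m a b : ℕ) : cycDist m a b = cycDist m b a := by
  unfold cycDist; rw [Nat.dist_comm]

lemma window_lt {M a b : ℕ} (hM : 1 ≤ M) (ha : 1 ≤ a) (hab : a < b) (hb : b ≤ 2*M) :
    ((Icc 1 M).filter fun i => a ∈ Icc i (i+M-1) ∧ b ∉ Icc i (i+M-1)).card
      + ((Icc 1 M).filter fun i => b ∈ Icc i (i+M-1) ∧ a ∉ Icc i (i+M-1)).card
    = cycDist (2*M) a b := by
  have e1 : ((Icc 1 M).filter fun i => a ∈ Icc i (i+M-1) ∧ b ∉ Icc i (i+M-1))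
      = Icc (max 1 (a+1-M)) (min a (b-M)) := by
    ext i
    simp only [mem_filter, mem_Icc, not_and, not_le]
    omega
  have e2 : ((Icc 1 M).filter fun i => b ∈ Icc i (i+M-1) ∧ a ∉ Icc i (i+M-1))
      = Icc (max (a+1) (b+1-M)) (min b M) := by
    ext i
    simp only [mem_filter, mem_Icc, not_and, not_le]
    omega
  rw [e1, e2, Nat.card_Icc, Nat.card_Icc]
  unfold cycDist Nat.dist
  omega

lemma window_ne {M a b : ℕ} (hM : 1 ≤ M) (ha : 1 ≤ a) (hb : 1 ≤ b) (hab : a ≠ b)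
    (ha2 : a ≤ 2*M) (hb2 : b ≤ 2*M) :
    ((Icc 1 M).filter fun i => a ∈ Icc i (i+M-1) ∧ b ∉ Icc i (i+M-1)).card
      + ((Icc 1 M).filter fun i => b ∈ Icc i (i+M-1) ∧ a ∉ Icc i (i+M-1)).card
    = cycDist (2*M) a b := by
  rcases lt_or_gt_of_ne hab with h | h
  · exact window_lt hM ha h hb2
  · rw [add_comm, cycDist_comm]
    exact window_lt hM hb h ha2

def Tsum (n : ℕ) : ℕ :=
  ∑ u : Fin n → Bool, ∑ v : Fin n → Bool,
    if cubeAdj u v then Nat.dist (gray n u) (gray n v) else 0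

def Csum (n : ℕ) : ℕ :=
  ∑ u : Fin n → Bool, ∑ v : Fin n → Bool,
    if cubeAdj u v then cycDist (2^n) (gray n u) (gray n v) else 0

lemma cross_sum (n : ℕ) (d : ℕ → ℕ → ℕ) :
    (∑ u : Fin n → Bool, ∑ v : Fin n → Bool,
      (if u = v then d (gray n u) (gray n v) else 0))
    = ∑ a ∈ Icc 1 (2^n), d a a := by
  rw [← sum_gray n (fun a => d a a)]
  apply Finset.sum_congr rfl
  intro u _
  rw [Finset.sum_ite_eq _ u (fun v => d (gray n u) (gray n v))]
  simp


lemma pow_id (n : ℕ) : (2:ℕ)^(n+1) = 2*2^n := by ring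

lemma Tsum_succ (n : ℕ) : Tsum (n+1) = 2 * Tsum n + 2 * 2^(2*n) := by
  have key : ∀ v : Fin n → Bool, gray n v ≤ 2^n := gray_le n
  have key1 : ∀ v : Fin n → Bool, 1 ≤ gray n v := gray_ge_one n
  have h2 := pow_id n
  unfold Tsum
  rw [sum_cons]
  simp only [sum_cons n]
  simp only [Fintype.sum_bool]
  rw [Finset.sum_add_distrib, Finset.sum_add_distrib]
  have ptTT : ∀ u v : Fin n → Bool,
      (if cubeAdj (Fin.cons true u) (Fin.cons true v) then
        Nat.dist (gray (n+1) (Fin.cons true u)) (gray (n+1) (Fin.cons true v)) else 0)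
      = (if cubeAdj u v then Nat.dist (gray n u) (gray n v) else 0) := by
    intro u v
    simp only [cubeAdj_cons, gray_succ]
    have hu := key u; have hv := key v
    simp only [ne_eq, not_true_eq_false, false_and, or_false, true_and, if_neg (by simp : ¬(true = false))]
    congr 1
    unfold Nat.dist
    omega
  have ptFF : ∀ u v : Fin n → Bool,
      (if cubeAdj (Fin.cons false u) (Fin.cons false v) then
        Nat.dist (gray (n+1) (Fin.cons false u)) (gray (n+1) (Fin.cons false v)) else 0)
      = (if cubeAdj u v then Nat.dist (gray n u) (gray n v) else 0) := by
    intro u v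
    simp only [cubeAdj_cons, gray_succ]
    simp
  have ptTF : ∀ u v : Fin n → Bool,
      (if cubeAdj (Fin.cons true u) (Fin.cons false v) then
        Nat.dist (gray (n+1) (Fin.cons true u)) (gray (n+1) (Fin.cons false v)) else 0)
      = (if u = v then Nat.dist (2^(n+1)+1 - gray n u) (gray n v) else 0) := by
    intro u v
    simp only [cubeAdj_cons, gray_succ]
    simp
  have ptFT : ∀ u v : Fin n → Bool,
      (if cubeAdj (Fin.cons false u) (Fin.cons true v) then
        Nat.dist (gray (n+1) (Fin.cons false u)) (gray (n+1) (Fin.cons true v)) else 0)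
      = (if u = v then Nat.dist (gray n u) (2^(n+1)+1 - gray n v) else 0) := by
    intro u v
    simp only [cubeAdj_cons, gray_succ]
    simp
  simp only [ptTT, ptFF, ptTF, ptFT]
  have cTF : (∑ u : Fin n → Bool, ∑ v : Fin n → Bool,
      (if u = v then Nat.dist (2^(n+1)+1 - gray n u) (gray n v) else 0)) = 2^(2*n) := by
    rw [cross_sum n (fun a b => Nat.dist (2^(n+1)+1 - a) b)]
    have : ∀ a ∈ Icc 1 (2^n), Nat.dist (2^(n+1)+1 - a) a = 2*2^n+1-2*a := by
      intro a ha
      simp only [mem_Icc] at ha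
      unfold Nat.dist
      omega
    rw [Finset.sum_congr rfl this, sum_refl (2^n), ← pow_mul, Nat.mul_comm n 2]
  have cFT : (∑ u : Fin n → Bool, ∑ v : Fin n → Bool,
      (if u = v then Nat.dist (gray n u) (2^(n+1)+1 - gray n v) else 0)) = 2^(2*n) := by
    rw [cross_sum n (fun a b => Nat.dist a (2^(n+1)+1 - b))]
    have : ∀ a ∈ Icc 1 (2^n), Nat.dist a (2^(n+1)+1 - a) = 2*2^n+1-2*a := by
      intro a ha
      simp only [mem_Icc] at ha
      unfold Nat.dist
      omega
    rw [Finset.sum_congr rfl this, sum_refl (2^n), ← pow_mul, Nat.mul_comm n 2]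
  rw [cTF, cFT]
  show Tsum n + 2^(2*n) + (2^(2*n) + Tsum n) = _
  unfold Tsum
  ring

lemma Tsum_zero : Tsum 0 = 0 := by decide

lemma Tsum_eq (n : ℕ) : Tsum n = 2^(2*n) - 2^n := by
  induction n with
  | zero => simp [Tsum_zero]
  | succ n ih =>
    rw [Tsum_succ, ih]
    have e1 : (2:ℕ)^(2*(n+1)) = 4*2^(2*n) := by ring
    have e2 : (2:ℕ)^(n+1) = 2*2^n := by ring
    have e3 : (1:ℕ) ≤ 2^n := Nat.one_le_two_pow
    have e4 : (2:ℕ)^n ≤ 2^(2*n) := Nat.pow_le_pow_right (by norm_num) (by omega)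
    omega

lemma Csum_succ (m : ℕ) : Csum (m+2) = 2 * Tsum (m+1) + 2 * 2^(2*m+1) := by
  set n := m + 1 with hn
  have key : ∀ v : Fin n → Bool, gray n v ≤ 2^n := gray_le n
  have key1 : ∀ v : Fin n → Bool, 1 ≤ gray n v := gray_ge_one n
  have h2 : (2:ℕ)^(n+1) = 2*2^n := by ring
  have h3 : (2:ℕ)^n = 2*2^m := by rw [hn]; ring
  show Csum (n+1) = _
  unfold Csum
  rw [sum_cons]
  simp only [sum_cons n]
  simp only [Fintype.sum_bool]
  rw [Finset.sum_add_distrib, Finset.sum_add_distrib]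
  have ptTT : ∀ u v : Fin n → Bool,
      (if cubeAdj (Fin.cons true u) (Fin.cons true v) then
        cycDist (2^(n+1)) (gray (n+1) (Fin.cons true u)) (gray (n+1) (Fin.cons true v)) else 0)
      = (if cubeAdj u v then Nat.dist (gray n u) (gray n v) else 0) := by
    intro u v
    simp only [cubeAdj_cons, gray_succ]
    have hu := key u; have hv := key v
    have hu1 := key1 u; have hv1 := key1 v
    norm_num
    split_ifs with h
    · unfold cycDist Nat.dist; omega
    · rfl
  have ptFF : ∀ u v : Fin n → Bool,
      (if cubeAdj (Fin.cons false u) (Fin.cons false v) then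
        cycDist (2^(n+1)) (gray (n+1) (Fin.cons false u)) (gray (n+1) (Fin.cons false v)) else 0)
      = (if cubeAdj u v then Nat.dist (gray n u) (gray n v) else 0) := by
    intro u v
    simp only [cubeAdj_cons, gray_succ]
    have hu := key u; have hv := key v
    have hu1 := key1 u; have hv1 := key1 v
    norm_num
    split_ifs with h
    · unfold cycDist Nat.dist; omega
    · rfl
  have ptTF : ∀ u v : Fin n → Bool,
      (if cubeAdj (Fin.cons true u) (Fin.cons false v) then
        cycDist (2^(n+1)) (gray (n+1) (Fin.cons true u)) (gray (n+1) (Fin.cons false v)) else 0)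
      = (if u = v then cycDist (2^(n+1)) (2^(n+1)+1 - gray n u) (gray n v) else 0) := by
    intro u v
    simp only [cubeAdj_cons, gray_succ]
    simp
  have ptFT : ∀ u v : Fin n → Bool,
      (if cubeAdj (Fin.cons false u) (Fin.cons true v) then
        cycDist (2^(n+1)) (gray (n+1) (Fin.cons false u)) (gray (n+1) (Fin.cons true v)) else 0)
      = (if u = v then cycDist (2^(n+1)) (gray n u) (2^(n+1)+1 - gray n v) else 0) := by
    intro u v
    simp only [cubeAdj_cons, gray_succ]
    simp
  simp only [ptTT, ptFF, ptTF, ptFT]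
  have cTF : (∑ u : Fin n → Bool, ∑ v : Fin n → Bool,
      (if u = v then cycDist (2^(n+1)) (2^(n+1)+1 - gray n u) (gray n v) else 0)) = 2^(2*m+1) := by
    rw [cross_sum n (fun a b => cycDist (2^(n+1)) (2^(n+1)+1 - a) b)]
    have hpt : ∀ a ∈ Icc 1 (2^n), cycDist (2^(n+1)) (2^(n+1)+1 - a) a
        = min (2*a-1) (4*2^m+1-2*a) := by
      intro a ha
      simp only [mem_Icc] at ha
      unfold cycDist Nat.dist
      omega
    rw [Finset.sum_congr rfl hpt]
    rw [show Icc 1 (2^n) = Icc 1 (2*2^m) by rw [h3]]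
    rw [sum_min (2^m)]
    rw [show 2*(2^m)^2 = 2^(2*m+1) by rw [← pow_mul]; ring]
  have cFT : (∑ u : Fin n → Bool, ∑ v : Fin n → Bool,
      (if u = v then cycDist (2^(n+1)) (gray n u) (2^(n+1)+1 - gray n v) else 0)) = 2^(2*m+1) := by
    rw [cross_sum n (fun a b => cycDist (2^(n+1)) a (2^(n+1)+1 - b))]
    have hpt : ∀ a ∈ Icc 1 (2^n), cycDist (2^(n+1)) a (2^(n+1)+1 - a)
        = min (2*a-1) (4*2^m+1-2*a) := by
      intro a ha
      simp only [mem_Icc] at ha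
      unfold cycDist Nat.dist
      omega
    rw [Finset.sum_congr rfl hpt]
    rw [show Icc 1 (2^n) = Icc 1 (2*2^m) by rw [h3]]
    rw [sum_min (2^m)]
    rw [show 2*(2^m)^2 = 2^(2*m+1) by rw [← pow_mul]; ring]
  rw [cTF, cFT]
  show Tsum n + 2^(2*m+1) + (2^(2*m+1) + Tsum n) = _
  unfold Tsum
  ring

lemma Csum_eq (m : ℕ) : Csum (m+2) = 3 * 2^(2*m+2) - 2^(m+2) := by
  rw [Csum_succ, Tsum_eq]
  have e1 : (2:ℕ)^(2*(m+1)) = 4*2^(2*m) := by ring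
  have e2 : (2:ℕ)^(m+1) = 2*2^m := by ring
  have e3 : (2:ℕ)^(2*m+1) = 2*2^(2*m) := by ring
  have e4 : (2:ℕ)^(2*m+2) = 4*2^(2*m) := by ring
  have e5 : (2:ℕ)^(m+2) = 4*2^m := by ring
  have e6 : (1:ℕ) ≤ 2^m := Nat.one_le_two_pow
  have e7 : (2:ℕ)^m ≤ 2^(2*m) := Nat.pow_le_pow_right (by norm_num) (by omega)
  omega

def Nwin (M a b : ℕ) : ℕ :=
  ((Icc 1 M).filter fun i => a ∈ Icc i (i+M-1) ∧ b ∉ Icc i (i+M-1)).card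

lemma cubeAdj_ne {n : ℕ} {u v : Fin n → Bool} (h : cubeAdj u v) : u ≠ v := by
  intro he
  rw [he] at h
  unfold cubeAdj at h
  rw [diffCount_eq_zero.2 rfl] at h
  exact one_ne_zero h.symm

lemma theta_eq (n : ℕ) (S : Finset (Fin n → Bool)) :
    theta n S = ∑ u : Fin n → Bool, ∑ v : Fin n → Bool,
      if (u ∈ S ∧ v ∉ S ∧ cubeAdj u v) then 1 else 0 := by
  unfold theta
  rw [Finset.card_filter, Finset.sum_product]


theorem stmt5 (n : ℕ) (hn : 2 ≤ n) :
    ∑ i ∈ Finset.Icc 1 (2 ^ (n - 1)),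
        theta n (Finset.univ.filter fun v =>
          gray n v ∈ Finset.Icc i (i + 2 ^ (n - 1) - 1)) =
      3 * 2 ^ (2 * n - 3) - 2 ^ (n - 1) := by
  obtain ⟨m, rfl⟩ : ∃ m, n = m + 2 := ⟨n - 2, by omega⟩
  have hM1 : m + 2 - 1 = m + 1 := rfl
  have hM3 : 2 * (m + 2) - 3 = 2*m + 1 := by omega
  rw [hM1, hM3]
  set n := m + 2 with hn'
  set M := 2 ^ (m+1) with hM
  have hMn : 2 * M = 2 ^ n := by rw [hM, hn']; ring
  -- Step 1: swap sums
  have step1 : ∑ i ∈ Icc 1 M,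
      theta n (Finset.univ.filter fun v => gray n v ∈ Icc i (i + M - 1))
      = ∑ u : Fin n → Bool, ∑ v : Fin n → Bool,
          if cubeAdj u v then Nwin M (gray n u) (gray n v) else 0 := by
    have e1 : ∀ i, theta n (Finset.univ.filter fun v => gray n v ∈ Icc i (i + M - 1))
        = ∑ u : Fin n → Bool, ∑ v : Fin n → Bool,
            if (gray n u ∈ Icc i (i+M-1) ∧ gray n v ∉ Icc i (i+M-1) ∧ cubeAdj u v)
            then 1 else 0 := by
      intro i
      rw [theta_eq]
      apply Finset.sum_congr rfl
      intro u _
      apply Finset.sum_congr rfl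
      intro v _
      congr 1
      simp [Finset.mem_filter]
    simp only [e1]
    rw [Finset.sum_comm]
    apply Finset.sum_congr rfl
    intro u _
    rw [Finset.sum_comm]
    apply Finset.sum_congr rfl
    intro v _
    by_cases h : cubeAdj u v
    · rw [if_pos h]
      unfold Nwin
      rw [Finset.card_filter]
      apply Finset.sum_congr rfl
      intro i _
      congr 1
      simp [h]
    · rw [if_neg h]
      apply Finset.sum_eq_zero
      intro i _
      simp [h]
  rw [step1]
  -- Step 2: symmetrize
  set A := ∑ u : Fin n → Bool, ∑ v : Fin n → Bool,
      if cubeAdj u v then Nwin M (gray n u) (gray n v) else 0 with hA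
  have sym : A = ∑ u : Fin n → Bool, ∑ v : Fin n → Bool,
      if cubeAdj u v then Nwin M (gray n v) (gray n u) else 0 := by
    rw [hA, Finset.sum_comm]
    apply Finset.sum_congr rfl
    intro u _
    apply Finset.sum_congr rfl
    intro v _
    congr 1
    · exact propext (cubeAdj_comm _ _)
  have twoA : A + A = Csum n := by
    nth_rewrite 2 [sym]
    rw [← Finset.sum_add_distrib]
    unfold Csum
    apply Finset.sum_congr rfl
    intro u _
    rw [← Finset.sum_add_distrib]
    apply Finset.sum_congr rfl
    intro v _
    by_cases h : cubeAdj u v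
    · rw [if_pos h, if_pos h, if_pos h]
      unfold Nwin
      rw [← hMn]
      exact window_ne (Nat.one_le_two_pow) (gray_ge_one n u) (gray_ge_one n v)
        (fun he => cubeAdj_ne h (gray_injective n he))
        (by rw [hMn]; exact gray_le n u) (by rw [hMn]; exact gray_le n v)
    · simp [h]
  have hC : Csum n = 3 * 2^(2*m+2) - 2^(m+2) := Csum_eq m
  have e1 : (2:ℕ)^(2*m+2) = 2*2^(2*m+1) := by ring
  have e2 : (2:ℕ)^(m+2) = 2*2^(m+1) := by ring
  have e3 : (1:ℕ) ≤ 2^(m+1) := Nat.one_le_two_pow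
  have e4 : (2:ℕ)^(m+1) ≤ 2^(2*m+1) := Nat.pow_le_pow_right (by norm_num) (by omega)
  omega
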